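/- Let n ≥ 1 and let σ, τ be permutations of Fin n, each satisfying ℓ(σ) + ℓ(σ⁻¹ * s) = n − 1 and ℓ(τ) + ℓ(τ⁻¹ * s) = n − 1, such that σ⁻¹ * τ is a transposition. Then either every σ-orbit is contained in a τ-orbit and ℓ(τ) = ℓ(σ) + 1, or every τ-orbit is contained in a σ-orbit and ℓ(σ) = ℓ(τ) + 1. (Edges of the interval from e to s are exactly covering relations of the refinement order on noncrossing partitions.) -/

import Mathlib

open Equiv Equiv.Perm

/-- Minimal number of transpositions whose product is `σ` (0 for the identity);
this is the graph distance from the identity to `σ` in the Cayley graph of the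
symmetric group on `Fin n` generated by all transpositions. -/
noncomputable def swapLength (n : ℕ) (σ : Equiv.Perm (Fin n)) : ℕ :=
  sInf {k | ∃ l : List (Equiv.Perm (Fin n)),
    l.length = k ∧ (∀ t ∈ l, t.IsSwap) ∧ l.prod = σ}

namespace SwapAux

variable {n : ℕ}

/-- number of orbits of a permutation -/
noncomputable def orbitCount (n : ℕ) (σ : Perm (Fin n)) : ℕ :=
  Nat.card (Quotient (SameCycle.setoid σ))

/-- closure induction: SameCycle is the least equivalence relation relating x and σ x -/
theorem sameCycle_le {σ : Perm (Fin n)} {r : Fin n → Fin n → Prop}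
    (hr : Equivalence r) (h : ∀ x, r x (σ x)) {x y : Fin n}
    (hxy : σ.SameCycle x y) : r x y := by
  obtain ⟨i, -, hi⟩ := hxy.exists_pow_eq'
  subst hi
  clear hxy
  induction i with
  | zero => simpa using hr.refl x
  | succ i ih =>
    have h' : (σ ^ (i+1)) x = σ ((σ ^ i) x) := by
      rw [pow_succ']; rfl
    rw [h']
    exact hr.trans ih (h _)

theorem mul_swap_eq {σ : Perm (Fin n)} {a b : Fin n} (x : Fin n)
    (hxa : x ≠ a) (hxb : x ≠ b) : (σ * Equiv.swap a b) x = σ x := by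
  simp [Equiv.Perm.mul_apply, Equiv.swap_apply_of_ne_of_ne hxa hxb]

/-- key1 : merge connect -/
theorem merge_connect {σ : Perm (Fin n)} {a b : Fin n} (hab : a ≠ b)
    (h : ¬ σ.SameCycle a b) : (σ * Equiv.swap a b).SameCycle a b := by
  set τ := σ * Equiv.swap a b with hτ
  have key : ∀ j : ℕ, (τ ^ (j+1)) a = (σ ^ (j+1)) b ∨ τ.SameCycle a b := by
    intro j
    induction j with
    | zero => left; simp [hτ, Equiv.Perm.mul_apply]
    | succ j ih =>
      rcases ih with h1 | h1
      · by_cases hb : (σ ^ (j+1)) b = b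
        · right
          refine ⟨(j+1 : ℕ), ?_⟩
          rw [zpow_natCast, h1, hb]
        by_cases ha : (σ ^ (j+1)) b = a
        · exact absurd ⟨-(j+1 : ℕ), by rw [zpow_neg, zpow_natCast, ← ha, Equiv.Perm.inv_def, Equiv.symm_apply_apply]⟩ h
        · left
          have h2 : (τ ^ (j+1+1)) a = τ ((τ ^ (j+1)) a) := by rw [pow_succ']; rfl
          have h4 : (σ ^ (j+1+1)) b = σ ((σ ^ (j+1)) b) := by rw [pow_succ']; rfl
          rw [h2, h4, h1, hτ, mul_swap_eq _ ha hb]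
      · right; exact h1
  have hord : 0 < orderOf σ := orderOf_pos σ
  obtain ⟨j, hj⟩ : ∃ j, j + 1 = orderOf σ := ⟨orderOf σ - 1, by omega⟩
  rcases key j with h1 | h1
  · refine ⟨(j+1 : ℕ), ?_⟩
    rw [zpow_natCast, h1, hj, pow_orderOf_eq_one]; rfl
  · exact h1

/-- key2 : merge refinement -/
theorem merge_refine {σ : Perm (Fin n)} {a b : Fin n} (hab : a ≠ b)
    (h : ¬ σ.SameCycle a b) {x y : Fin n} (hxy : σ.SameCycle x y) :
    (σ * Equiv.swap a b).SameCycle x y := by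
  set τ := σ * Equiv.swap a b with hτ
  refine sameCycle_le (SameCycle.equivalence τ) (fun z => ?_) hxy
  by_cases hza : z = a
  · rw [hza]
    have h1 : τ b = σ a := by simp [hτ, Equiv.Perm.mul_apply]
    have h2 : τ.SameCycle b (σ a) := ⟨1, by simpa using h1⟩
    have h3 : τ a = σ b := by simp [hτ, Equiv.Perm.mul_apply]
    exact (merge_connect hab h).trans h2
  by_cases hzb : z = b
  · rw [hzb]
    have h1 : τ a = σ b := by simp [hτ, Equiv.Perm.mul_apply]
    have h2 : τ.SameCycle a (σ b) := ⟨1, by simpa using h1⟩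
    exact (merge_connect hab h).symm.trans h2
  · exact ⟨1, by rw [zpow_one, hτ, mul_swap_eq z hza hzb]⟩

/-- the merged relation -/
def mergeRel (σ : Perm (Fin n)) (a b : Fin n) : Fin n → Fin n → Prop := fun x y =>
  σ.SameCycle x y ∨ (σ.SameCycle x a ∧ σ.SameCycle y b) ∨ (σ.SameCycle x b ∧ σ.SameCycle y a)

theorem mergeRel_equivalence (σ : Perm (Fin n)) (a b : Fin n) :
    Equivalence (mergeRel σ a b) := by
  constructor
  · intro x; exact Or.inl (SameCycle.refl σ x)
  · rintro x y (h | ⟨h1, h2⟩ | ⟨h1, h2⟩)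
    · exact Or.inl h.symm
    · exact Or.inr (Or.inr ⟨h2, h1⟩)
    · exact Or.inr (Or.inl ⟨h2, h1⟩)
  · rintro x y z (h | ⟨h1, h2⟩ | ⟨h1, h2⟩) (h' | ⟨h1', h2'⟩ | ⟨h1', h2'⟩)
    · exact Or.inl (h.trans h')
    · exact Or.inr (Or.inl ⟨h.trans h1', h2'⟩)
    · exact Or.inr (Or.inr ⟨h.trans h1', h2'⟩)
    · exact Or.inr (Or.inl ⟨h1, h'.symm.trans h2⟩)
    · exact Or.inr (Or.inl ⟨h1, h2'⟩)
    · exact Or.inl (h1.trans h2'.symm)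
    · exact Or.inr (Or.inr ⟨h1, h'.symm.trans h2⟩)
    · exact Or.inl (h1.trans h2'.symm)
    · exact Or.inr (Or.inr ⟨h1, h2'⟩)

/-- unconditional: SameCycle of σ * swap a b is contained in the merged relation of σ -/
theorem sameCycle_mul_swap_le_mergeRel (σ : Perm (Fin n)) {a b : Fin n} (hab : a ≠ b)
    {x y : Fin n} (hxy : (σ * Equiv.swap a b).SameCycle x y) : mergeRel σ a b x y := by
  refine sameCycle_le (mergeRel_equivalence σ a b) (fun z => ?_) hxy
  by_cases hza : z = a
  · rw [hza]
    have h1 : (σ * Equiv.swap a b) a = σ b := by simp [Equiv.Perm.mul_apply]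
    rw [h1]
    exact Or.inr (Or.inl ⟨SameCycle.refl σ a, ⟨-1, by simp⟩⟩)
  by_cases hzb : z = b
  · rw [hzb]
    have h1 : (σ * Equiv.swap a b) b = σ a := by simp [Equiv.Perm.mul_apply]
    rw [h1]
    exact Or.inr (Or.inr ⟨SameCycle.refl σ b, ⟨-1, by simp⟩⟩)
  · rw [mul_swap_eq z hza hzb]
    exact Or.inl ⟨1, by simp⟩

/-- key3: split disconnect -/
theorem pow_mul_fixed {π : Perm (Fin n)} {k : ℕ} {x : Fin n} (hk : (π ^ k) x = x)
    (q : ℕ) : (π ^ (k * q)) x = x := by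
  induction q with
  | zero => simp
  | succ q ih =>
    have : π ^ (k * (q + 1)) = π ^ k * π ^ (k * q) := by
      rw [← pow_add]; ring_nf
    rw [this, Equiv.Perm.mul_apply, ih, hk]

theorem split_disconnect {σ : Perm (Fin n)} {a b : Fin n} (hab : a ≠ b)
    (h : σ.SameCycle a b) : ¬ (σ * Equiv.swap a b).SameCycle a b := by
  set τ := σ * Equiv.swap a b with hτ
  have hex : ∃ k, 0 < k ∧ (σ ^ k) a = b := by
    obtain ⟨i, hi, -, hie⟩ := h.exists_pow_eq''
    exact ⟨i, hi, hie⟩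
  classical
  set k := Nat.find hex with hkdef
  obtain ⟨hk0, hkab⟩ : 0 < k ∧ (σ ^ k) a = b := Nat.find_spec hex
  have hmin : ∀ m, m < k → ¬(0 < m ∧ (σ ^ m) a = b) := fun m hm => Nat.find_min hex hm
  have hA : ∀ j, 0 < j → j < k → (σ ^ j) a ≠ a := by
    intro j hj0 hjk hja
    have h1 : (σ ^ (k - j)) a = b := by
      have : σ ^ k = σ ^ (k - j) * σ ^ j := by rw [← pow_add]; congr 1; omega
      rw [this, Equiv.Perm.mul_apply, hja] at hkab
      exact hkab
    exact hmin (k - j) (by omega) ⟨by omega, h1⟩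
  have hB : ∀ j, 0 < j → j < k → (σ ^ j) a ≠ b := by
    intro j hj0 hjk hjb
    exact hmin j hjk ⟨hj0, hjb⟩
  have hC : ∀ j, 0 < j → j ≤ k → (τ ^ j) b = (σ ^ j) a := by
    intro j
    induction j with
    | zero => omega
    | succ j ih =>
      intro _ hjk
      rcases Nat.eq_zero_or_pos j with hj | hj
      · subst hj
        simp only [zero_add, pow_one]
        rw [hτ, Equiv.Perm.mul_apply, Equiv.swap_apply_right]
      · have h1 : (τ ^ (j + 1)) b = τ ((τ ^ j) b) := by rw [pow_succ']; rfl
        have h2 : (σ ^ (j + 1)) a = σ ((σ ^ j) a) := by rw [pow_succ']; rfl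
        rw [h1, h2, ih hj (by omega), hτ,
          mul_swap_eq _ (hA j hj (by omega)) (hB j hj (by omega))]
  have hD : (τ ^ k) b = b := by rw [hC k hk0 le_rfl, hkab]
  rintro hsc
  obtain ⟨i, -, hi⟩ := hsc.symm.exists_pow_eq'
  have hmod : (τ ^ i) b = (τ ^ (i % k)) b := by
    have h1 : τ ^ i = τ ^ (i % k) * τ ^ (k * (i / k)) := by
      have h2 : i % k + k * (i / k) = i := Nat.mod_add_div i k
      rw [← pow_add, h2]
    rw [h1, Equiv.Perm.mul_apply, pow_mul_fixed hD]
  rw [hmod] at hi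
  rcases Nat.eq_zero_or_pos (i % k) with hr | hr
  · rw [hr] at hi; simp at hi; exact hab hi.symm
  · have hrk : i % k < k := Nat.mod_lt _ hk0
    rw [hC _ hr (le_of_lt hrk)] at hi
    exact hA _ hr hrk hi


theorem card_quot_le_of_le {s t : Setoid (Fin n)} (h : ∀ x y, s.r x y → t.r x y) :
    Nat.card (Quotient t) ≤ Nat.card (Quotient s) := by
  apply Nat.card_le_card_of_surjective (Quotient.map' id fun x y hxy => h x y hxy)
  intro q
  obtain ⟨x, rfl⟩ := q.exists_rep
  exact ⟨Quotient.mk _ x, rfl⟩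

theorem card_quot_lt {s t : Setoid (Fin n)} (h : ∀ x y, s.r x y → t.r x y) (a b : Fin n)
    (hs : ¬ s.r a b) (ht : t.r a b) : Nat.card (Quotient t) < Nat.card (Quotient s) := by
  classical
  letI : Fintype (Quotient s) := Fintype.ofFinite _
  letI : Fintype (Quotient t) := Fintype.ofFinite _
  rw [Nat.card_eq_fintype_card, Nat.card_eq_fintype_card]
  apply Fintype.card_lt_of_surjective_not_injective
    (Quotient.map' id fun x y hxy => h x y hxy)
  · intro q
    obtain ⟨x, rfl⟩ := q.exists_rep
    exact ⟨Quotient.mk _ x, rfl⟩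
  · intro hinj
    have h1 : (Quotient.map' (s₁ := s) (s₂ := t) id fun x y hxy => h x y hxy)
        (Quotient.mk s a) = Quotient.map' id (fun x y hxy => h x y hxy) (Quotient.mk s b) := by
      simp only [Quotient.map'_mk'']
      exact Quotient.sound' ht
    exact hs (Quotient.exact' (hinj h1))

theorem card_quot_le_succ {s t : Setoid (Fin n)} (a b : Fin n)
    (hst : ∀ x y, s.r x y → t.r x y)
    (hts : ∀ x y, t.r x y → s.r x y ∨ (s.r x a ∧ s.r y b) ∨ (s.r x b ∧ s.r y a)) :
    Nat.card (Quotient s) ≤ Nat.card (Quotient t) + 1 := by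
  classical
  set f : Quotient s → Quotient t := Quotient.map' id (fun x y hxy => hst x y hxy) with hf
  set F : Quotient s → Option (Quotient t) :=
    fun q => if q = Quotient.mk s b then none else some (f q) with hF
  have hinj : Function.Injective F := by
    intro x y hxy
    by_cases hx : x = Quotient.mk s b <;> by_cases hy : y = Quotient.mk s b
    · rw [hx, hy]
    · exact absurd hxy (by rw [hF]; simp [hx, hy])
    · exact absurd hxy (by rw [hF]; simp [hx, hy])
    · rw [hF] at hxy
      simp only [if_neg hx, if_neg hy, Option.some.injEq] at hxy
      obtain ⟨u, rfl⟩ := x.exists_rep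
      obtain ⟨v, rfl⟩ := y.exists_rep
      have h2 : t.r u v := by
        apply Quotient.exact' (s₁ := t)
        simpa only [hf, Quotient.map'_mk'', id_eq] using hxy
      rcases hts u v h2 with h3 | ⟨h3, h4⟩ | ⟨h3, h4⟩
      · exact Quotient.sound' h3
      · exact absurd (Quotient.sound' h4) hy
      · exact absurd (Quotient.sound' h3) hx
  calc Nat.card (Quotient s) ≤ Nat.card (Option (Quotient t)) :=
        Nat.card_le_card_of_injective F hinj
    _ = Nat.card (Quotient t) + 1 := Finite.card_option

theorem orbitCount_le (σ : Perm (Fin n)) : orbitCount n σ ≤ n := by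
  have h := Nat.card_le_card_of_surjective
    (Quotient.mk (SameCycle.setoid σ)) (fun q => q.exists_rep)
  simpa [orbitCount] using h

theorem orbitCount_one : orbitCount n (1 : Perm (Fin n)) = n := by
  have e : Quotient (SameCycle.setoid (1 : Perm (Fin n))) ≃ Fin n :=
    { toFun := Quotient.lift id (fun x y h => sameCycle_one.mp h)
      invFun := Quotient.mk _
      left_inv := by rintro ⟨x⟩; rfl
      right_inv := fun x => rfl }
  rw [orbitCount, Nat.card_congr e, Nat.card_eq_fintype_card, Fintype.card_fin]

theorem swapLength_exists (σ : Perm (Fin n)) :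
    ∃ l : List (Perm (Fin n)), l.length = swapLength n σ ∧ (∀ t ∈ l, t.IsSwap) ∧
      l.prod = σ := by
  have hne : {k | ∃ l : List (Perm (Fin n)),
      l.length = k ∧ (∀ t ∈ l, t.IsSwap) ∧ l.prod = σ}.Nonempty := by
    obtain ⟨l, hl1, hl2⟩ := (truncSwapFactors σ).out
    exact ⟨l.length, l, rfl, hl2, hl1⟩
  exact Nat.sInf_mem hne

theorem swapLength_le (σ : Perm (Fin n)) (l : List (Perm (Fin n)))
    (h1 : ∀ t ∈ l, t.IsSwap) (h2 : l.prod = σ) : swapLength n σ ≤ l.length :=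
  Nat.sInf_le ⟨l, rfl, h1, h2⟩

theorem swapLength_mul_swap_le (σ : Perm (Fin n)) {a b : Fin n} (hab : a ≠ b) :
    swapLength n (σ * Equiv.swap a b) ≤ swapLength n σ + 1 := by
  obtain ⟨l, hl1, hl2, hl3⟩ := swapLength_exists σ
  have := swapLength_le (σ * Equiv.swap a b) (l ++ [Equiv.swap a b]) ?_ ?_
  · simpa [hl1] using this
  · intro t ht
    rcases List.mem_append.mp ht with h | h
    · exact hl2 t h
    · simp only [List.mem_singleton] at h
      exact h ▸ ⟨a, b, hab, rfl⟩
  · simp [hl3]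

theorem split_refine {σ : Perm (Fin n)} {a b : Fin n} (hab : a ≠ b)
    (hsc : σ.SameCycle a b) {x y : Fin n}
    (hxy : (σ * Equiv.swap a b).SameCycle x y) : σ.SameCycle x y := by
  rcases sameCycle_mul_swap_le_mergeRel σ hab hxy with h | ⟨h2, h3⟩ | ⟨h2, h3⟩
  · exact h
  · exact (h2.trans hsc).trans h3.symm
  · exact (h2.trans hsc.symm).trans h3.symm

theorem ub (σ : Perm (Fin n)) : swapLength n σ ≤ n - orbitCount n σ := by
  suffices H : ∀ m (σ : Perm (Fin n)), σ.support.card = m →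
      swapLength n σ ≤ n - orbitCount n σ from H _ σ rfl
  intro m
  induction m using Nat.strong_induction_on with
  | _ m ih =>
    intro σ hm
    by_cases h1 : σ = 1
    · subst h1
      have h2 : swapLength n (1 : Perm (Fin n)) ≤ 0 :=
        swapLength_le 1 [] (by simp) (by simp)
      omega
    · have ha : ∃ a, σ a ≠ a := by
        by_contra hc
        push_neg at hc
        exact h1 (Equiv.ext hc)
      obtain ⟨a, ha⟩ := ha
      set c := σ⁻¹ a with hcdef
      have hc : σ c = a := Equiv.apply_symm_apply σ a
      have hca : c ≠ a := by
        intro h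
        rw [h] at hc
        exact ha hc
      set π := σ * Equiv.swap c a with hπ
      have hsc : σ.SameCycle c a := ⟨1, by simpa using hc⟩
      have hkey3 : ¬ π.SameCycle c a := split_disconnect hca hsc
      have href : ∀ x y, π.SameCycle x y → σ.SameCycle x y := fun x y hxy =>
        split_refine hca hsc hxy
      have hcount : orbitCount n σ < orbitCount n π :=
        card_quot_lt (s := SameCycle.setoid π) (t := SameCycle.setoid σ) href c a hkey3 hsc
      have hπeq : π = Equiv.swap a (σ a) * σ := by
        rw [hπ, Equiv.mul_swap_eq_swap_mul, hc]
      have hsupp : π.support.card < m := by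
        rw [hπeq, ← hm]
        exact Equiv.Perm.card_support_swap_mul ha
      have hih : swapLength n π ≤ n - orbitCount n π := ih _ hsupp π rfl
      have htri : swapLength n σ ≤ swapLength n π + 1 := by
        have h3 : π * Equiv.swap c a = σ := by
          rw [hπ, mul_assoc, Equiv.swap_mul_self, mul_one]
        calc swapLength n σ = swapLength n (π * Equiv.swap c a) := by rw [h3]
          _ ≤ swapLength n π + 1 := swapLength_mul_swap_le π hca
      have h5 : orbitCount n π ≤ n := orbitCount_le π
      omega

theorem lb_list (l : List (Perm (Fin n))) (h : ∀ t ∈ l, t.IsSwap) :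
    n - orbitCount n l.prod ≤ l.length := by
  induction l with
  | nil => simp [orbitCount_one]
  | cons t l ihl =>
    have ih := ihl (fun u hu => h u (List.mem_cons_of_mem t hu))
    obtain ⟨x, y, hxy, rfl⟩ := h t List.mem_cons_self
    set ρ := l.prod with hρ
    have heq : (Equiv.swap x y :: l).prod = ρ * Equiv.swap (ρ⁻¹ x) (ρ⁻¹ y) := by
      rw [List.prod_cons, Equiv.swap_mul_eq_mul_swap]
    have hcd : ρ⁻¹ x ≠ ρ⁻¹ y := fun hxx => hxy (by simpa using congrArg ρ hxx)
    rw [heq]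
    by_cases hsc : ρ.SameCycle (ρ⁻¹ x) (ρ⁻¹ y)
    · have h2 : orbitCount n ρ ≤ orbitCount n (ρ * Equiv.swap (ρ⁻¹ x) (ρ⁻¹ y)) :=
        card_quot_le_of_le (s := SameCycle.setoid (ρ * Equiv.swap (ρ⁻¹ x) (ρ⁻¹ y)))
          (t := SameCycle.setoid ρ) (fun u v huv => split_refine hcd hsc huv)
      simp only [List.length_cons]
      omega
    · have h2 : orbitCount n ρ ≤ orbitCount n (ρ * Equiv.swap (ρ⁻¹ x) (ρ⁻¹ y)) + 1 :=
        card_quot_le_succ (ρ⁻¹ x) (ρ⁻¹ y)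
          (fun u v huv => merge_refine hcd hsc huv)
          (fun u v huv => sameCycle_mul_swap_le_mergeRel ρ hcd huv)
      simp only [List.length_cons]
      omega

theorem lb (σ : Perm (Fin n)) : n - orbitCount n σ ≤ swapLength n σ := by
  obtain ⟨l, hl1, hl2, hl3⟩ := swapLength_exists σ
  rw [← hl1, ← hl3]
  exact lb_list l hl2

theorem merge_main {σ : Perm (Fin n)} {a b : Fin n} (hab : a ≠ b)
    (h : ¬ σ.SameCycle a b) :
    (∀ i j, σ.SameCycle i j → (σ * Equiv.swap a b).SameCycle i j) ∧
      swapLength n (σ * Equiv.swap a b) = swapLength n σ + 1 := by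
  refine ⟨fun i j hij => merge_refine hab h hij, ?_⟩
  have h1 : swapLength n (σ * Equiv.swap a b) ≤ swapLength n σ + 1 :=
    swapLength_mul_swap_le σ hab
  have h2 : orbitCount n (σ * Equiv.swap a b) < orbitCount n σ :=
    card_quot_lt (s := SameCycle.setoid σ) (t := SameCycle.setoid (σ * Equiv.swap a b))
      (fun x y hxy => merge_refine hab h hxy) a b h (merge_connect hab h)
  have h3 := ub σ
  have h4 := lb (σ * Equiv.swap a b)
  have h5 := orbitCount_le σ
  omega

end SwapAux

/-- Edges of the interval from `e` to `s` are exactly covering relations of the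
refinement order on noncrossing partitions: if `σ` and `τ` both lie in the
interval and differ by a transposition, then the orbit partition of one refines
that of the other, with lengths differing by one. -/
theorem interval_edge_is_covering (n : ℕ) (hn : 1 ≤ n) (σ τ : Equiv.Perm (Fin n))
    (hσ : swapLength n σ + swapLength n (σ⁻¹ * finRotate n) = n - 1)
    (hτ : swapLength n τ + swapLength n (τ⁻¹ * finRotate n) = n - 1)
    (hst : ∃ a b : Fin n, a ≠ b ∧ σ⁻¹ * τ = Equiv.swap a b) :
    ((∀ i j : Fin n, σ.SameCycle i j → τ.SameCycle i j) ∧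
        swapLength n τ = swapLength n σ + 1) ∨
    ((∀ i j : Fin n, τ.SameCycle i j → σ.SameCycle i j) ∧
        swapLength n σ = swapLength n τ + 1) := by
  obtain ⟨a, b, hab, he⟩ := hst
  have hτs : τ = σ * Equiv.swap a b := by
    rw [← he, ← mul_assoc]
    group
  by_cases hc : σ.SameCycle a b
  · right
    have h3 : σ = τ * Equiv.swap a b := by
      rw [hτs, mul_assoc, Equiv.swap_mul_self, mul_one]
    have hkey3 : ¬ τ.SameCycle a b := by
      rw [hτs]
      exact SwapAux.split_disconnect hab hc
    have hm := SwapAux.merge_main hab hkey3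
    rw [← h3] at hm
    exact hm
  · left
    have hm := SwapAux.merge_main hab hc
    rw [← hτs] at hm
    exact hm
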